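/- Let K be a compact convex set satisfying the Riesz decomposition property for proper convex combinations. If x ∈ K is written as two convex combinations of distinct extreme points, x = Σ_{i=1}^n α_i x_i = Σ_{j=1}^m β_j y_j with all α_i, β_j > 0, x_1,...,x_n distinct extreme points and y_1,...,y_m distinct extreme points, then n = m, {x_1,...,x_n} = {y_1,...,y_m}, and the corresponding coefficients agree. -/

import Mathlib

/-- The Riesz decomposition property for proper convex combinations in a convex
subset `K` of a real vector space. -/
def HasRieszDecomp {E : Type*} [AddCommGroup E] [Module ℝ E] (K : Set E) : Prop :=
  ∀ (n m : ℕ) (α : Fin n → ℝ) (β : Fin m → ℝ) (x : Fin n → E) (y : Fin m → E),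
    (∀ j, 0 < α j) → (∀ i, 0 < β i) → ∑ j, α j = 1 → ∑ i, β i = 1 →
    (∀ j, x j ∈ K) → (∀ i, y i ∈ K) →
    ∑ j, α j • x j = ∑ i, β i • y i →
    ∃ (γ : Fin m → Fin n → ℝ) (z : Fin m → Fin n → E),
      (∀ i j, 0 ≤ γ i j) ∧ (∀ i j, z i j ∈ K) ∧
      (∑ j, α j • x j) = ∑ i, ∑ j, γ i j • z i j ∧
      (∀ j, α j = ∑ i, γ i j) ∧ (∀ i, β i = ∑ j, γ i j) ∧
      (∀ j, x j = ∑ i, ((α j)⁻¹ * γ i j) • z i j) ∧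
      (∀ i, y i = ∑ j, ((β i)⁻¹ * γ i j) • z i j)

/-- In a compact convex set with the Riesz decomposition property, a point has at most
one representation as a proper convex combination of distinct extreme points: the two
families coincide up to a bijection matching both points and coefficients. -/

lemma extreme_of_convex_comb {E : Type*} [AddCommGroup E] [Module ℝ E] {K : Set E}
    (hKconv : Convex ℝ K) {k : ℕ} {w : Fin k → ℝ} {p : Fin k → E} {e : E}
    (he : e ∈ Set.extremePoints ℝ K) (hw : ∀ i, 0 ≤ w i) (hw1 : ∑ i, w i = 1)
    (hp : ∀ i, p i ∈ K) (hsum : ∑ i, w i • p i = e) :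
    ∀ i, 0 < w i → p i = e := by
  intro i hi
  by_cases h1 : w i = 1
  · have hz : ∀ j ∈ Finset.univ.erase i, w j = 0 := by
      have hs : ∑ j ∈ Finset.univ.erase i, w j = 0 := by
        have := Finset.sum_erase_add Finset.univ w (Finset.mem_univ i)
        simp only [hw1] at this
        linarith
      exact fun j hj => le_antisymm (by
        have := Finset.sum_le_sum (fun l (hl : l ∈ Finset.univ.erase i) => hw l)
        have h2 := Finset.single_le_sum (fun l (_ : l ∈ Finset.univ.erase i) => hw l) hj
        linarith) (hw j) |>.symm ▸ rfl
    have : e = w i • p i := by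
      rw [← hsum, ← Finset.sum_erase_add Finset.univ _ (Finset.mem_univ i)]
      rw [Finset.sum_eq_zero (fun j hj => by rw [hz j hj, zero_smul]), zero_add]
    rw [this, h1, one_smul]
  · have hle : w i ≤ 1 := hw1 ▸ Finset.single_le_sum (fun l _ => hw l) (Finset.mem_univ i)
    have hlt : w i < 1 := lt_of_le_of_ne hle h1
    set t : ℝ := 1 - w i with ht_def
    have ht : 0 < t := by simp [ht_def]; linarith
    have hterase : ∑ j ∈ Finset.univ.erase i, w j = t := by
      have := Finset.sum_erase_add Finset.univ w (Finset.mem_univ i)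
      rw [hw1] at this; linarith
    set q : E := ∑ j ∈ Finset.univ.erase i, (t⁻¹ * w j) • p j with hq_def
    have hqK : q ∈ K := by
      apply hKconv.sum_mem
      · exact fun j _ => mul_nonneg (inv_nonneg.2 ht.le) (hw j)
      · rw [← Finset.mul_sum, hterase, inv_mul_cancel₀ ht.ne']
      · exact fun j _ => hp j
    have htq : t • q = ∑ j ∈ Finset.univ.erase i, w j • p j := by
      rw [hq_def, Finset.smul_sum]
      refine Finset.sum_congr rfl fun j _ => ?_
      rw [smul_smul, ← mul_assoc, mul_inv_cancel₀ ht.ne', one_mul]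
    have hseg : e ∈ openSegment ℝ (p i) q := by
      refine ⟨w i, t, hi, ht, by simp [ht_def], ?_⟩
      rw [htq, ← hsum, ← Finset.sum_erase_add Finset.univ _ (Finset.mem_univ i), add_comm]
    exact ((mem_extremePoints.1 he).2 (p i) (hp i) q hqK hseg).1

theorem unique_representation_of_extreme_points
    {E : Type*} [AddCommGroup E] [Module ℝ E] [TopologicalSpace E]
    [IsTopologicalAddGroup E] [ContinuousSMul ℝ E] [LocallyConvexSpace ℝ E]
    (K : Set E) (hKc : IsCompact K) (hKconv : Convex ℝ K)
    (hK : HasRieszDecomp K)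
    (n m : ℕ) (α : Fin n → ℝ) (β : Fin m → ℝ) (x : Fin n → E) (y : Fin m → E)
    (hα : ∀ i, 0 < α i) (hβ : ∀ j, 0 < β j)
    (hα1 : ∑ i, α i = 1) (hβ1 : ∑ j, β j = 1)
    (hx : ∀ i, x i ∈ Set.extremePoints ℝ K) (hy : ∀ j, y j ∈ Set.extremePoints ℝ K)
    (hxinj : Function.Injective x) (hyinj : Function.Injective y)
    (heq : ∑ i, α i • x i = ∑ j, β j • y j) :
    ∃ σ : Fin n ≃ Fin m, ∀ i, y (σ i) = x i ∧ β (σ i) = α i := by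
  obtain ⟨γ, z, hγ0, hzK, -, hαγ, hβγ, hxz, hyz⟩ :=
    hK n m α β x y hα hβ hα1 hβ1 (fun i => (hx i).1) (fun j => (hy j).1) heq
  -- key: positive γ i j forces x j = y i
  have key : ∀ i j, 0 < γ i j → x j = y i := by
    intro i j hij
    have hxj : z i j = x j := by
      refine extreme_of_convex_comb hKconv (hx j) (w := fun i => (α j)⁻¹ * γ i j)
        (fun i' => mul_nonneg (inv_nonneg.2 (hα j).le) (hγ0 i' j)) ?_
        (fun i' => hzK i' j) (hxz j).symm i
        (mul_pos (inv_pos.2 (hα j)) hij)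
      rw [← Finset.mul_sum, ← hαγ j, inv_mul_cancel₀ (hα j).ne']
    have hyi : z i j = y i := by
      refine extreme_of_convex_comb hKconv (hy i) (w := fun j => (β i)⁻¹ * γ i j)
        (fun j' => mul_nonneg (inv_nonneg.2 (hβ i).le) (hγ0 i j')) ?_
        (fun j' => hzK i j') (hyz i).symm j
        (mul_pos (inv_pos.2 (hβ i)) hij)
      rw [← Finset.mul_sum, ← hβγ i, inv_mul_cancel₀ (hβ i).ne']
    rw [← hxj, hyi]
  have hex : ∀ j : Fin n, ∃ i, 0 < γ i j := by
    intro j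
    by_contra h
    push_neg at h
    have : α j = 0 := by
      rw [hαγ j]
      exact Finset.sum_eq_zero fun i _ => le_antisymm (h i) (hγ0 i j)
    exact (hα j).ne' this
  have hex' : ∀ i : Fin m, ∃ j, 0 < γ i j := by
    intro i
    by_contra h
    push_neg at h
    have : β i = 0 := by
      rw [hβγ i]
      exact Finset.sum_eq_zero fun j _ => le_antisymm (h j) (hγ0 i j)
    exact (hβ i).ne' this
  choose σ' hσ' using hex
  choose τ hτ using hex'
  have hyσ : ∀ j, y (σ' j) = x j := fun j => (key _ _ (hσ' j)).symm
  have hxτ : ∀ i, x (τ i) = y i := fun i => key _ _ (hτ i)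
  have hτσ : ∀ j, τ (σ' j) = j := fun j => hxinj (by rw [hxτ, hyσ])
  have hστ : ∀ i, σ' (τ i) = i := fun i => hyinj (by rw [hyσ, hxτ])
  refine ⟨⟨σ', τ, hτσ, hστ⟩, fun j => ⟨hyσ j, ?_⟩⟩
  -- coefficient: β (σ' j) = α j
  have hzero : ∀ i, i ≠ σ' j → γ i j = 0 := by
    intro i hi
    by_contra h
    have hpos : 0 < γ i j := lt_of_le_of_ne (hγ0 i j) (Ne.symm h)
    exact hi (hyinj (by rw [← key i j hpos, hyσ]))
  have hzero' : ∀ j', j' ≠ j → γ (σ' j) j' = 0 := by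
    intro j' hj'
    by_contra h
    have hpos : 0 < γ (σ' j) j' := lt_of_le_of_ne (hγ0 _ _) (Ne.symm h)
    exact hj' (hxinj ((key _ _ hpos).trans (hyσ j)))
  have hαj : α j = γ (σ' j) j := by
    rw [hαγ j]
    exact Finset.sum_eq_single_of_mem _ (Finset.mem_univ _) (fun i _ hi => hzero i hi)
  have hβj : β (σ' j) = γ (σ' j) j := by
    rw [hβγ (σ' j)]
    exact Finset.sum_eq_single_of_mem _ (Finset.mem_univ _) (fun j' _ hj' => hzero' j' hj')
  show β (σ' j) = α j
  rw [hβj, hαj]
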